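/- Let X be a real Hilbert space, let m ≥ 2, and for each i ∈ {1,…,m} let T_i : X → X be firmly nonexpansive with minimal displacement vector v_i (the minimal-norm element of the closure of the range of Id − T_i). Then for every ε > 0 there exist points x_1,…,x_m ∈ X and vectors c_1,…,c_m ∈ X with ∑_{i=1}^{m} ‖c_i‖ ≤ ε such that x_i = c_i + v_i + T_i x_{i−1} for every i ∈ {1,…,m}, where x_0 := x_m. -/

import Mathlib

open scoped RealInnerProductSpace

set_option maxHeartbeats 2000000

theorem stmt_1 {X : Type*} [NormedAddCommGroup X] [InnerProductSpace ℝ X] [CompleteSpace X]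
    (m : ℕ) (hm : 2 ≤ m) (T : Fin m → X → X)
    (hT : ∀ i, ∀ x y : X, ‖T i x - T i y‖ ^ 2 ≤ (inner ℝ (x - y) (T i x - T i y) : ℝ))
    (v : Fin m → X)
    (hv : ∀ i, v i ∈ closure (Set.range (fun x => x - T i x)))
    (hvmin : ∀ i, ∀ w ∈ closure (Set.range (fun x => x - T i x)), ‖v i‖ ≤ ‖w‖)
    (ε : ℝ) (hε : 0 < ε) :
    ∃ x c : Fin m → X, (∑ i, ‖c i‖) ≤ ε ∧
      ∀ i : Fin m, x i = c i + v i + T i (x (i - ⟨1, by omega⟩)) := by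
  haveI : NeZero m := ⟨by omega⟩
  have hm0 : (0:ℝ) < m := by exact_mod_cast (by omega : 0 < m)
  set one : Fin m := ⟨1, by omega⟩ with hone
  -- nonexpansiveness
  have hne : ∀ i, ∀ a b : X, ‖T i a - T i b‖ ≤ ‖a - b‖ := by
    intro i a b
    have h1 := hT i a b
    have h2 : (inner ℝ (a - b) (T i a - T i b) : ℝ) ≤ ‖a - b‖ * ‖T i a - T i b‖ :=
      real_inner_le_norm _ _
    rcases (norm_nonneg (T i a - T i b)).eq_or_lt with h | h
    · rw [← h]; exact norm_nonneg _
    · nlinarith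
  -- small parameter η (opaque)
  obtain ⟨η, hη, hη8⟩ : ∃ η : ℝ, 0 < η ∧ 8 * m * η = ε :=
    ⟨ε / (8 * m), by positivity, by field_simp⟩
  -- near-minimizers z i (opaque)
  have hzex : ∀ i : Fin m, ∃ zi : X, ‖zi - T i zi - v i‖ ≤ η := by
    intro i
    obtain ⟨b, hb, hdist⟩ := Metric.mem_closure_iff.mp (hv i) η hη
    obtain ⟨zi, rfl⟩ := hb
    exact ⟨zi, by rw [← dist_eq_norm, dist_comm]; exact hdist.le⟩
  choose z hz using hzex
  -- bound Z on the z i (opaque)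
  obtain ⟨Z, hZi, hZ0⟩ : ∃ Z : ℝ, (∀ i, ‖z i‖ ≤ Z) ∧ 0 ≤ Z := by
    refine ⟨∑ i, ‖z i‖, fun i => ?_, Finset.sum_nonneg fun i _ => norm_nonneg _⟩
    exact Finset.single_le_sum (f := fun i => ‖z i‖) (fun j _ => norm_nonneg _)
      (Finset.mem_univ i)
  -- constants
  obtain ⟨K₀, hK₀, hK₀def⟩ : ∃ K₀ : ℝ, 0 ≤ K₀ ∧ K₀ = Z + η :=
    ⟨Z + η, by positivity, rfl⟩
  obtain ⟨C₁, hC₁, hC₁def⟩ : ∃ C₁ : ℝ, 0 ≤ C₁ ∧ C₁ = 2 * η * K₀ + K₀ ^ 2 :=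
    ⟨2 * η * K₀ + K₀ ^ 2, by positivity, rfl⟩
  obtain ⟨B, hB, hBdef⟩ : ∃ B : ℝ, 0 ≤ B ∧ B = m ^ 2 * C₁ :=
    ⟨m ^ 2 * C₁, by positivity, rfl⟩
  obtain ⟨β, hβpos, hβhalf, hβB⟩ :
      ∃ β : ℝ, 0 < β ∧ β ≤ 1/2 ∧ β ≤ ε ^ 2 / (8 * (B + 1)) :=
    ⟨min (1/2) (ε ^ 2 / (8 * (B + 1))), lt_min (by norm_num) (by positivity),
      min_le_left _ _, min_le_right _ _⟩
  obtain ⟨l, hl0, hl1, hlβ⟩ : ∃ l : ℝ, 0 ≤ l ∧ l < 1 ∧ 1 - l = β :=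
    ⟨1 - β, by linarith, by linarith, by ring⟩
  -- the contraction and its fixed point
  obtain ⟨x, hfix⟩ : ∃ x : Fin m → X, ∀ i : Fin m, x i = v i + T i (l • x (i - one)) := by
    set l' : NNReal := ⟨l, hl0⟩ with hl'def
    have hcl : (l' : ℝ) = l := rfl
    set f : (Fin m → X) → (Fin m → X) := fun xx i => v i + T i (l • xx (i - one)) with hfdef
    have hlip : LipschitzWith l' f := by
      apply LipschitzWith.of_dist_le_mul
      intro xx yy
      rw [dist_pi_le_iff (by positivity)]
      intro i
      have hd : dist (f xx i) (f yy i) = ‖T i (l • xx (i - one)) - T i (l • yy (i - one))‖ := by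
        simp only [hfdef, dist_eq_norm, add_sub_add_left_eq_sub]
      rw [hd, hcl]
      calc ‖T i (l • xx (i - one)) - T i (l • yy (i - one))‖
          ≤ ‖l • xx (i - one) - l • yy (i - one)‖ := hne _ _ _
        _ = l * ‖xx (i - one) - yy (i - one)‖ := by
            rw [← smul_sub, norm_smul, Real.norm_of_nonneg hl0]
        _ = l * dist (xx (i - one)) (yy (i - one)) := by rw [dist_eq_norm]
        _ ≤ l * dist xx yy := mul_le_mul_of_nonneg_left (dist_le_pi_dist xx yy _) hl0
    have hcontr : ContractingWith l' f := by
      refine ⟨?_, hlip⟩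
      rw [← NNReal.coe_lt_coe, hcl, NNReal.coe_one]
      exact hl1
    refine ⟨ContractingWith.fixedPoint f hcontr, fun i => ?_⟩
    exact (congrFun (hcontr.fixedPoint_isFixedPt) i).symm
  -- reindexing bijection
  have hbij : Function.Bijective (fun i : Fin m => i - one) := by
    constructor
    · intro a b h
      have h2 : a - one + one = b - one + one := congrArg (· + one) h
      rwa [sub_add_cancel, sub_add_cancel] at h2
    · intro j
      exact ⟨j + one, add_sub_cancel_right j one⟩
  -- sums
  obtain ⟨N2, hN2def, hN20⟩ : ∃ N2 : ℝ, N2 = ∑ i, ‖x i‖ ^ 2 ∧ 0 ≤ N2 :=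
    ⟨_, rfl, Finset.sum_nonneg fun i _ => by positivity⟩
  obtain ⟨S, hSdef, hS0⟩ : ∃ S : ℝ, S = ∑ i, ‖x i‖ ∧ 0 ≤ S :=
    ⟨_, rfl, Finset.sum_nonneg fun i _ => norm_nonneg _⟩
  have hre2 : ∑ i, ‖x (i - one)‖ ^ 2 = N2 := by
    rw [hN2def]; exact Fintype.sum_bijective _ hbij _ _ (fun i => rfl)
  have hre1 : ∑ i, ‖x (i - one)‖ = S := by
    rw [hSdef]; exact Fintype.sum_bijective _ hbij _ _ (fun i => rfl)
  -- per-index key inequality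
  have key : ∀ i : Fin m, ‖x i‖ ^ 2 - l ^ 2 * ‖x (i - one)‖ ^ 2 ≤ 2 * η * ‖x i‖ + C₁ := by
    intro i
    set p : X := x (i - one) with hpdef
    set y : X := l • p with hydef
    set d : X := x i - y with hddef
    have hTy : T i y = x i - v i := by rw [hfix i]; abel
    set w : X := z i - T i (z i) - v i with hwdef
    have hwn : ‖w‖ ≤ η := hz i
    have hTz : T i (z i) = z i - v i - w := by rw [hwdef]; abel
    set a : X := x i - z i + w with hadef
    have hfirm := hT i y (z i)
    have e1 : T i y - T i (z i) = a := by rw [hTy, hTz, hadef]; abel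
    have e2 : y - z i = a - (w + d) := by rw [hadef, hddef]; abel
    rw [e1, e2, inner_sub_left, real_inner_self_eq_norm_sq] at hfirm
    have h1 : (inner ℝ (w + d) a : ℝ) ≤ 0 := by linarith
    have h2 : (inner ℝ d a : ℝ) ≤ η * ‖a‖ := by
      have e3 : (inner ℝ d a : ℝ) = inner ℝ (w + d) a - inner ℝ w a := by
        rw [← inner_sub_left]; congr 1; abel
      have h4 : |(inner ℝ w a : ℝ)| ≤ ‖w‖ * ‖a‖ := abs_real_inner_le_norm _ _
      have h5 : -(inner ℝ w a : ℝ) ≤ ‖w‖ * ‖a‖ := by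
        have := neg_abs_le (inner ℝ w a : ℝ); linarith
      have h6 : ‖w‖ * ‖a‖ ≤ η * ‖a‖ := mul_le_mul_of_nonneg_right hwn (norm_nonneg _)
      linarith
    have h3 : (inner ℝ d (x i) : ℝ) ≤ η * ‖a‖ + ‖d‖ * K₀ := by
      have e4 : (inner ℝ d (x i) : ℝ) = inner ℝ d a + inner ℝ d (z i - w) := by
        rw [← inner_add_right]; congr 1; rw [hadef]; abel
      have h7 : (inner ℝ d (z i - w) : ℝ) ≤ ‖d‖ * ‖z i - w‖ := real_inner_le_norm _ _
      have h8 : ‖z i - w‖ ≤ K₀ := by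
        rw [hK₀def]
        calc ‖z i - w‖ ≤ ‖z i‖ + ‖w‖ := norm_sub_le _ _
          _ ≤ Z + η := add_le_add (hZi i) hwn
      have h9 : ‖d‖ * ‖z i - w‖ ≤ ‖d‖ * K₀ := mul_le_mul_of_nonneg_left h8 (norm_nonneg _)
      linarith
    have h4 : 2 * (inner ℝ d (x i) : ℝ) = ‖d‖ ^ 2 + ‖x i‖ ^ 2 - ‖y‖ ^ 2 := by
      have e5 : ‖d‖ ^ 2 = ‖x i‖ ^ 2 - 2 * (inner ℝ (x i) y : ℝ) + ‖y‖ ^ 2 := by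
        rw [hddef]; exact norm_sub_sq_real _ _
      have e6 : (inner ℝ d (x i) : ℝ) = ‖x i‖ ^ 2 - inner ℝ (x i) y := by
        rw [hddef, inner_sub_left, real_inner_self_eq_norm_sq, real_inner_comm]
      linarith
    have h5 : ‖y‖ = l * ‖p‖ := by
      rw [hydef, norm_smul, Real.norm_of_nonneg hl0]
    have h6 : ‖a‖ ≤ ‖x i‖ + K₀ := by
      rw [hK₀def]
      calc ‖a‖ ≤ ‖x i - z i‖ + ‖w‖ := norm_add_le _ _
        _ ≤ ‖x i‖ + ‖z i‖ + ‖w‖ := by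
            have := norm_sub_le (x i) (z i); linarith
        _ ≤ ‖x i‖ + (Z + η) := by
            have := hZi i; linarith
    have hy2 : ‖y‖ ^ 2 = l ^ 2 * ‖p‖ ^ 2 := by rw [h5]; ring
    have hηa : η * ‖a‖ ≤ η * ‖x i‖ + η * K₀ := by
      have hq := mul_le_mul_of_nonneg_left h6 hη.le
      rw [mul_add] at hq; exact hq
    have hdk : 2 * (‖d‖ * K₀) - ‖d‖ ^ 2 ≤ K₀ ^ 2 := by nlinarith [sq_nonneg (‖d‖ - K₀)]
    linarith
  -- summed inequality
  have hsum : (1 - l ^ 2) * N2 ≤ 2 * η * S + m * C₁ := by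
    have h := Finset.sum_le_sum (fun i (_ : i ∈ Finset.univ) => key i)
    have hL : ∑ i, (‖x i‖ ^ 2 - l ^ 2 * ‖x (i - one)‖ ^ 2) = (1 - l ^ 2) * N2 := by
      rw [Finset.sum_sub_distrib, ← Finset.mul_sum, hre2, ← hN2def]
      ring
    have hR : ∑ i : Fin m, (2 * η * ‖x i‖ + C₁) = 2 * η * S + m * C₁ := by
      rw [Finset.sum_add_distrib, ← Finset.mul_sum, ← hSdef, Finset.sum_const]
      simp [Finset.card_univ]
    rw [hL, hR] at h
    exact h
  have hmain : β * N2 ≤ 2 * η * S + m * C₁ := by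
    have hb : β ≤ 1 - l ^ 2 := by nlinarith
    nlinarith
  -- Cauchy-Schwarz
  have hCS : S ^ 2 ≤ m * N2 := by
    have h := Finset.sum_mul_sq_le_sq_mul_sq Finset.univ (fun _ : Fin m => (1:ℝ))
      (fun i => ‖x i‖)
    rw [hSdef, hN2def]
    simpa [Finset.card_univ, mul_comm] using h
  have hfinal : β * S ≤ ε := by
    have hβS2 : β * S ^ 2 ≤ 2 * m * η * S + B := by
      have h1 : β * S ^ 2 ≤ β * (m * N2) := mul_le_mul_of_nonneg_left hCS hβpos.le
      have h3 : m * (β * N2) ≤ m * (2 * η * S + m * C₁) :=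
        mul_le_mul_of_nonneg_left hmain hm0.le
      nlinarith
    have hη4 : 4 * m * η = ε / 2 := by linarith
    rcases le_or_gt (β * S) (4 * m * η) with hcase | hcase
    · linarith
    · have h5 : 2 * m * η * S ≤ (β * S) * S / 2 := by nlinarith
      have h6 : (β * S) ^ 2 ≤ 2 * B * β := by nlinarith
      have h7 : (β * S) ^ 2 ≤ ε ^ 2 / 4 := by
        have h8 : 2 * B * β ≤ 2 * (B + 1) * (ε ^ 2 / (8 * (B + 1))) := by
          have h9 := mul_le_mul_of_nonneg_left hβB (by linarith : (0:ℝ) ≤ 2 * (B + 1))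
          nlinarith
        have h9 : 2 * (B + 1) * (ε ^ 2 / (8 * (B + 1))) = ε ^ 2 / 4 := by
          field_simp; ring
        linarith
      have hβS0 : 0 ≤ β * S := by positivity
      nlinarith
  -- construct c
  refine ⟨x, fun i => x i - v i - T i (x (i - one)), ?_, ?_⟩
  · have hc : ∀ i : Fin m, ‖x i - v i - T i (x (i - one))‖ ≤ β * ‖x (i - one)‖ := by
      intro i
      have e1 : x i - v i - T i (x (i - one)) = T i (l • x (i - one)) - T i (x (i - one)) := by
        rw [hfix i]; abel
      rw [e1]
      calc ‖T i (l • x (i - one)) - T i (x (i - one))‖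
          ≤ ‖l • x (i - one) - x (i - one)‖ := hne _ _ _
        _ = ‖(l - 1) • x (i - one)‖ := by rw [sub_smul, one_smul]
        _ = |l - 1| * ‖x (i - one)‖ := by rw [norm_smul, Real.norm_eq_abs]
        _ = β * ‖x (i - one)‖ := by
            rw [abs_of_nonpos (by linarith), ← hlβ]; ring
    calc (∑ i, ‖x i - v i - T i (x (i - one))‖)
        ≤ ∑ i, β * ‖x (i - one)‖ := Finset.sum_le_sum (fun i _ => hc i)
      _ = β * S := by rw [← Finset.mul_sum, hre1]
      _ ≤ ε := hfinal
  · intro i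
    show x i = (x i - v i - T i (x (i - one))) + v i + T i (x (i - one))
    abel
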